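/- arXiv:1907.03875 — 2 statements merged into one kernel-verified Lean document; each statement's English description precedes it below -/
import Mathlib

section
/- For every η > 0, the family 𝒯_η = {𝒳} if ε_I < η for all I ∈ 𝕋, and otherwise 𝒯_η = {I ∈ 𝕋 : ∃ J ∈ 𝕋 with J ⊆ I and ε_J ≥ η}, is a finite subtree of 𝕋 (it is closed under taking parents and has finitely many cells). -/
open MeasureTheory Set ProbabilityTheory
open scoped BigOperators ENNReal NNReal

attribute [local instance] Classical.propDecidable

noncomputable section

/-- Euclidean space `ℝ^D`. -/
abbrev Euc (D : ℕ) : Type := EuclideanSpace ℝ (Fin D)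

/-- A partition tree on a subset `X` of `ℝ^D`, with branching number at most `a`.
Cells are abstract nodes; `cset I` is the subset of `ℝ^D` associated with the cell `I`,
`depth I` its depth, `parent I` its parent. -/
structure PartitionTree (D : ℕ) (X : Set (Euc D)) (a : ℕ) : Type 1 where
  Cell : Type
  cellCountable : Countable Cell
  cset : Cell → Set (Euc D)
  depth : Cell → ℕ
  parent : Cell → Cell
  root : Cell
  root_cset : cset root = X
  depth_root : depth root = 0
  parent_root : parent root = root
  eq_root_of_depth_eq_zero : ∀ I, depth I = 0 → I = root
  depth_parent : ∀ I, I ≠ root → depth (parent I) + 1 = depth I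
  level_finite : ∀ j : ℕ, {I | depth I = j}.Finite
  level_cover : ∀ j : ℕ, ⋃ I ∈ {I | depth I = j}, cset I = X
  level_disjoint : ∀ I J, depth I = depth J → I ≠ J → Disjoint (cset I) (cset J)
  cset_measurable : ∀ I, MeasurableSet (cset I)
  cset_eq_iUnion_children : ∀ I, cset I = ⋃ J ∈ {J | parent J = I ∧ J ≠ root}, cset J
  ncard_children_le : ∀ I, {J | parent J = I ∧ J ≠ root}.ncard ≤ a

namespace PartitionTree

variable {D : ℕ} {X : Set (Euc D)} {a : ℕ} (T : PartitionTree D X a)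

/-- The children of a cell. -/
def children (I : T.Cell) : Set T.Cell := {J | T.parent J = I ∧ J ≠ T.root}

/-- `descend k I` is the set `𝒞^k(I)` of `k`-th generation descendants of `I`. -/
def descend : ℕ → T.Cell → Set T.Cell
  | 0, I => {I}
  | k + 1, I => ⋃ J ∈ descend k I, T.children J

/-- A subtree: a family of cells containing the parent of each of its cells. -/
def IsSubtree (S : Set T.Cell) : Prop := ∀ I ∈ S, T.parent I ∈ S

/-- The outer leaves `Λ(𝒯)` of a subtree `𝒯`. -/
def outerLeaves (S : Set T.Cell) : Set T.Cell := {I | I ∉ S ∧ T.parent I ∈ S}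

end PartitionTree

/-- The essential diameter of a set `I` with respect to the measure `ρ`:
`ediam ρ I = inf { diam (I \ J) | J ⊆ I Borel, ρ J = 0 }`. -/
def ediam {D : ℕ} (ρ : Measure (Euc D)) (I : Set (Euc D)) : ℝ :=
  ⨅ J : {J : Set (Euc D) // MeasurableSet J ∧ J ⊆ I ∧ ρ J = 0},
    Metric.diam (I \ (J : Set (Euc D)))

namespace PartitionTree

variable {D : ℕ} {X : Set (Euc D)} {a : ℕ} (T : PartitionTree D X a)
  (ρ : Measure (Euc D)) (xstar : T.Cell → Euc D)

/-- The (population) center of mass `c_I` of a cell: `ρ(I)⁻¹ ∫_I x dρ(x)` if `ρ(I) > 0`,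
and the arbitrary fixed point `xstar I` otherwise. -/
def center (I : T.Cell) : Euc D :=
  if ρ (T.cset I) ≠ 0 then (ρ (T.cset I)).toReal⁻¹ • ∫ x in T.cset I, x ∂ρ else xstar I

/-- The local expected distortion `ℰ_I = ∫_I ‖x - c_I‖² dρ(x)`. -/
def cellErr (I : T.Cell) : ℝ := ∫ x in T.cset I, ‖x - T.center ρ xstar I‖ ^ 2 ∂ρ

/-- `ε_I² = ℰ_I - ∑_{J ∈ 𝒞(I)} ℰ_J`. -/
def epsSq (I : T.Cell) : ℝ :=
  T.cellErr ρ xstar I - ∑ᶠ J ∈ T.children I, T.cellErr ρ xstar J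

/-- `ε_I ≥ 0`, defined by `ε_I² = ℰ_I - ∑_{J ∈ 𝒞(I)} ℰ_J`. -/
def eps (I : T.Cell) : ℝ := Real.sqrt (T.epsSq ρ xstar I)

/-- The subtree `𝒯_η`. -/
def Teta (η : ℝ) : Set T.Cell :=
  if ∀ I, T.eps ρ xstar I < η then {T.root}
  else {I | ∃ k, ∃ J ∈ T.descend k I, η ≤ T.eps ρ xstar J}

/-- The nonlinear projection `P_Λ(x) = ∑_{I ∈ Λ} c_I 1_I(x)` associated with a family of
cells `Λ` and code vectors `c`. -/
def proj (c : T.Cell → Euc D) (Λ : Set T.Cell) (x : Euc D) : Euc D :=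
  ∑ᶠ I ∈ Λ, (T.cset I).indicator (fun _ => c I) x

variable {n : ℕ}

/-- The number `n_I` of sample points lying in the cell `I`. -/
def empCount (x : Fin n → Euc D) (I : T.Cell) : ℕ := {i | x i ∈ T.cset I}.ncard

/-- The empirical center of mass `ĉ_I` of a cell: the average of the sample points lying in
`I` if there are any, and the arbitrary fixed point `xhat I` otherwise. -/
def empCenter (xhat : T.Cell → Euc D) (x : Fin n → Euc D) (I : T.Cell) : Euc D :=
  if T.empCount x I ≠ 0 then
    ((T.empCount x I : ℝ))⁻¹ • ∑ᶠ i ∈ {i : Fin n | x i ∈ T.cset I}, x i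
  else xhat I

/-- The empirical local distortion `Ê_I = n⁻¹ ∑_{i : X_i ∈ I} ‖X_i - ĉ_I‖²`. -/
def empErr (xhat : T.Cell → Euc D) (x : Fin n → Euc D) (I : T.Cell) : ℝ :=
  (n : ℝ)⁻¹ * ∑ᶠ i ∈ {i : Fin n | x i ∈ T.cset I}, ‖x i - T.empCenter xhat x I‖ ^ 2

/-- `ε̂_I² = Ê_I - ∑_{J ∈ 𝒞(I)} Ê_J`. -/
def empEpsSq (xhat : T.Cell → Euc D) (x : Fin n → Euc D) (I : T.Cell) : ℝ :=
  T.empErr xhat x I - ∑ᶠ J ∈ T.children I, T.empErr xhat x J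

/-- `ε̂_I ≥ 0`, defined by `ε̂_I² = Ê_I - ∑_{J ∈ 𝒞(I)} Ê_J`. -/
def empEps (xhat : T.Cell → Euc D) (x : Fin n → Euc D) (I : T.Cell) : ℝ :=
  Real.sqrt (T.empEpsSq xhat x I)

/-- The empirical subtree `T̂_η`, truncated at depth `jn`. -/
def empTeta (xhat : T.Cell → Euc D) (x : Fin n → Euc D) (jn : ℕ) (η : ℝ) : Set T.Cell :=
  if ∀ I, T.depth I ≤ jn → T.empEps xhat x I < η then {T.root}
  else {I | ∃ k, ∃ J ∈ T.descend k I, T.depth J ≤ jn ∧ η ≤ T.empEps xhat x J}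

end PartitionTree

/-- Assumption A: `ediam(I) ≤ C₁ ρ(I)^s` and `ediam(I) ≤ C₂ b^{-j_I}` for every cell `I`. -/
def AssumptionA {D : ℕ} {X : Set (Euc D)} {a : ℕ} (T : PartitionTree D X a)
    (ρ : Measure (Euc D)) (b s C₁ C₂ : ℝ) : Prop :=
  ∀ I : T.Cell,
    ediam ρ (T.cset I) ≤ C₁ * (ρ (T.cset I)).toReal ^ s ∧
    ediam ρ (T.cset I) ≤ C₂ * b ^ (-(T.depth I : ℝ))

namespace PartitionTree

variable {D : ℕ} {X : Set (Euc D)} {a : ℕ} (T : PartitionTree D X a)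

lemma children_finite (I : T.Cell) : (T.children I).Finite := by
  apply (T.level_finite (T.depth I + 1)).subset
  rintro J ⟨hp, hr⟩
  have := T.depth_parent J hr
  rw [hp] at this
  simpa using this.symm

lemma depth_of_children {I J : T.Cell} (h : J ∈ T.children I) :
    T.depth J = T.depth I + 1 := by
  have := T.depth_parent J h.2
  rw [h.1] at this
  omega

lemma descend_subset_descend_succ {P I : T.Cell} (h : I ∈ T.children P) (k : ℕ) :
    T.descend k I ⊆ T.descend (k + 1) P := by
  induction k with
  | zero =>
    intro J hJ
    simp only [descend, Set.mem_singleton_iff] at hJ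
    subst hJ
    simp only [descend, Set.mem_iUnion]
    exact ⟨P, rfl, h⟩
  | succ k ih =>
    intro J hJ
    simp only [descend, Set.mem_iUnion] at hJ
    obtain ⟨J', hJ', hc⟩ := hJ
    show J ∈ ⋃ J'' ∈ T.descend (k+1) P, T.children J''
    simp only [Set.mem_iUnion]
    exact ⟨J', ih hJ', hc⟩

lemma descend_spec : ∀ (k : ℕ) {I J : T.Cell}, J ∈ T.descend k I →
    T.parent^[k] J = I ∧ T.depth J = T.depth I + k := by
  intro k
  induction k with
  | zero =>
    intro I J hJ
    simp only [descend, Set.mem_singleton_iff] at hJ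
    subst hJ
    simp
  | succ k ih =>
    intro I J hJ
    simp only [descend, Set.mem_iUnion] at hJ
    obtain ⟨J', hJ', hc⟩ := hJ
    obtain ⟨h1, h2⟩ := ih hJ'
    have hd := T.depth_parent J hc.2
    rw [hc.1] at hd
    constructor
    · rw [Function.iterate_succ_apply, hc.1, h1]
    · omega

end PartitionTree
section Analytic

variable {D : ℕ} {X : Set (Euc D)}

lemma ae_bound_of_bounded (ρ : Measure (Euc D)) (hρX : ρ Xᶜ = 0)
    (hXb : Bornology.IsBounded X) : ∃ R : ℝ, ∀ᵐ x ∂ρ, ‖x‖ ≤ R := by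
  obtain ⟨R, hR⟩ := hXb.exists_norm_le
  refine ⟨R, ?_⟩
  refine MeasureTheory.ae_iff.mpr (measure_mono_null ?_ hρX)
  intro x hx
  exact fun hxX => hx (hR x hxX)

lemma integrable_id_of_bound (μ : Measure (Euc D)) [IsFiniteMeasure μ]
    {R : ℝ} (hR : ∀ᵐ x ∂μ, ‖x‖ ≤ R) : Integrable (fun x : Euc D => x) μ :=
  ⟨measurable_id.aestronglyMeasurable, MeasureTheory.HasFiniteIntegral.of_bounded hR⟩

lemma integrable_sq_of_bound (μ : Measure (Euc D)) [IsFiniteMeasure μ]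
    {R : ℝ} (hR : ∀ᵐ x ∂μ, ‖x‖ ≤ R) (c : Euc D) :
    Integrable (fun x : Euc D => ‖x - c‖ ^ 2) μ := by
  refine ⟨(Continuous.aestronglyMeasurable (by continuity)), ?_⟩
  apply MeasureTheory.HasFiniteIntegral.of_bounded (C := (R + ‖c‖) ^ 2)
  filter_upwards [hR] with x hx
  have h1 : ‖x - c‖ ≤ R + ‖c‖ := (norm_sub_le x c).trans (by linarith)
  have h0 : (0:ℝ) ≤ ‖x - c‖ := norm_nonneg _
  calc ‖‖x - c‖ ^ 2‖ = ‖x - c‖ ^ 2 := by rw [Real.norm_of_nonneg (by positivity)]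
    _ ≤ (R + ‖c‖) ^ 2 := by nlinarith

/-- Bias-variance: the center of mass minimizes the mean squared error. -/
lemma com_min (ρ : Measure (Euc D)) [IsProbabilityMeasure ρ]
    {R : ℝ} (hR : ∀ᵐ x ∂ρ, ‖x‖ ≤ R) {A : Set (Euc D)}
    (hρA : ρ A ≠ 0) (c : Euc D) :
    ∫ x in A, ‖x - (ρ A).toReal⁻¹ • ∫ y in A, y ∂ρ‖ ^ 2 ∂ρ ≤
      ∫ x in A, ‖x - c‖ ^ 2 ∂ρ := by
  set cA : Euc D := (ρ A).toReal⁻¹ • ∫ y in A, y ∂ρ with hcA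
  have htR : (ρ A).toReal ≠ 0 :=
    ENNReal.toReal_ne_zero.mpr ⟨hρA, measure_ne_top ρ A⟩
  have hRr : ∀ᵐ x ∂(ρ.restrict A), ‖x‖ ≤ R := MeasureTheory.ae_restrict_of_ae hR
  have hid : Integrable (fun x : Euc D => x) (ρ.restrict A) :=
    integrable_id_of_bound _ hRr
  have hidc : Integrable (fun x : Euc D => x - cA) (ρ.restrict A) :=
    hid.sub (integrable_const cA)
  have hzero : ∫ x in A, (x - cA) ∂ρ = 0 := by
    rw [MeasureTheory.integral_sub hid (integrable_const _),
      MeasureTheory.setIntegral_const, measureReal_def, hcA, smul_inv_smul₀ htR, sub_self]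
  have key : ∀ x : Euc D, ‖x - c‖ ^ 2
      = ‖x - cA‖ ^ 2 + (2 * (inner ℝ (cA - c) (x - cA) : ℝ) + ‖cA - c‖ ^ 2) := by
    intro x
    have : x - c = (x - cA) + (cA - c) := by abel
    rw [this, norm_add_sq_real, real_inner_comm]
    ring
  have hf1 : Integrable (fun x : Euc D => ‖x - cA‖ ^ 2) (ρ.restrict A) :=
    integrable_sq_of_bound _ hRr cA
  have hg : Integrable (fun x : Euc D => (inner ℝ (cA - c) (x - cA) : ℝ)) (ρ.restrict A) :=
    hidc.const_inner _
  have hf2 : Integrable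
      (fun x : Euc D => 2 * (inner ℝ (cA - c) (x - cA) : ℝ) + ‖cA - c‖ ^ 2) (ρ.restrict A) :=
    (hg.const_mul 2).add (integrable_const _)
  have hsplit : ∫ x in A, ‖x - c‖ ^ 2 ∂ρ
      = ∫ x in A, ‖x - cA‖ ^ 2 ∂ρ
        + ∫ x in A, (2 * (inner ℝ (cA - c) (x - cA) : ℝ) + ‖cA - c‖ ^ 2) ∂ρ := by
    rw [← MeasureTheory.integral_add hf1 hf2]
    exact MeasureTheory.integral_congr_ae (Filter.Eventually.of_forall (fun x => key x))
  have hsecond : ∫ x in A, (2 * (inner ℝ (cA - c) (x - cA) : ℝ) + ‖cA - c‖ ^ 2) ∂ρ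
      = (ρ A).toReal * ‖cA - c‖ ^ 2 := by
    rw [MeasureTheory.integral_add (hg.const_mul 2) (integrable_const _),
      MeasureTheory.integral_const_mul, integral_inner hidc, hzero,
      MeasureTheory.setIntegral_const]
    simp [measureReal_def]
  rw [hsplit, hsecond]
  have h1 : 0 ≤ (ρ A).toReal * ‖cA - c‖ ^ 2 := by positivity
  linarith

end Analytic
namespace PartitionTree

variable {D : ℕ} {X : Set (Euc D)} {a : ℕ} (T : PartitionTree D X a)
  (ρ : Measure (Euc D)) [IsProbabilityMeasure ρ] (xstar : T.Cell → Euc D)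

lemma cellErr_nonneg (I : T.Cell) : 0 ≤ T.cellErr ρ xstar I :=
  MeasureTheory.integral_nonneg (fun x => by positivity)

lemma children_pairwise_disjoint (I : T.Cell) :
    (↑(T.children_finite I).toFinset : Set T.Cell).Pairwise (Function.onFun Disjoint T.cset) := by
  intro J hJ J' hJ' hne
  simp only [Set.Finite.coe_toFinset] at hJ hJ'
  exact T.level_disjoint J J'
    (by rw [T.depth_of_children hJ, T.depth_of_children hJ']) hne

lemma cellErr_eq_sum_children {R : ℝ} (hR : ∀ᵐ x ∂ρ, ‖x‖ ≤ R) (I : T.Cell) (c : Euc D) :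
    ∫ x in T.cset I, ‖x - c‖ ^ 2 ∂ρ
      = ∑ J ∈ (T.children_finite I).toFinset, ∫ x in T.cset J, ‖x - c‖ ^ 2 ∂ρ := by
  have hun : T.cset I = ⋃ J ∈ (T.children_finite I).toFinset, T.cset J := by
    rw [T.cset_eq_iUnion_children I]
    congr 1
    ext J
    simp only [Set.mem_iUnion, Set.Finite.mem_toFinset]
    rfl
  rw [hun]
  exact MeasureTheory.integral_biUnion_finset _
    (fun J _ => T.cset_measurable J)
    (T.children_pairwise_disjoint I)
    (fun J _ => (integrable_sq_of_bound _ (MeasureTheory.ae_restrict_of_ae hR) c))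

lemma cellErr_le {R : ℝ} (hR : ∀ᵐ x ∂ρ, ‖x‖ ≤ R) (J : T.Cell) (c : Euc D) :
    T.cellErr ρ xstar J ≤ ∫ x in T.cset J, ‖x - c‖ ^ 2 ∂ρ := by
  unfold cellErr center
  by_cases h : ρ (T.cset J) ≠ 0
  · rw [if_pos h]
    exact com_min ρ hR h c
  · push_neg at h
    have hz : ρ.restrict (T.cset J) = 0 := MeasureTheory.Measure.restrict_eq_zero.mpr h
    rw [hz]
    simp

lemma epsSq_eq (I : T.Cell) : T.epsSq ρ xstar I
    = T.cellErr ρ xstar I - ∑ J ∈ (T.children_finite I).toFinset, T.cellErr ρ xstar J := by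
  unfold epsSq
  rw [finsum_mem_eq_finite_toFinset_sum _ (T.children_finite I)]

lemma sum_children_cellErr_le {R : ℝ} (hR : ∀ᵐ x ∂ρ, ‖x‖ ≤ R) (I : T.Cell) :
    ∑ J ∈ (T.children_finite I).toFinset, T.cellErr ρ xstar J ≤ T.cellErr ρ xstar I := by
  calc ∑ J ∈ (T.children_finite I).toFinset, T.cellErr ρ xstar J
      ≤ ∑ J ∈ (T.children_finite I).toFinset,
          ∫ x in T.cset J, ‖x - T.center ρ xstar I‖ ^ 2 ∂ρ :=
        Finset.sum_le_sum (fun J _ => T.cellErr_le ρ xstar hR J _)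
    _ = T.cellErr ρ xstar I := (T.cellErr_eq_sum_children ρ hR I _).symm

lemma epsSq_nonneg {R : ℝ} (hR : ∀ᵐ x ∂ρ, ‖x‖ ≤ R) (I : T.Cell) :
    0 ≤ T.epsSq ρ xstar I := by
  rw [T.epsSq_eq]
  have := T.sum_children_cellErr_le ρ xstar hR I
  linarith

end PartitionTree
namespace PartitionTree

variable {D : ℕ} {X : Set (Euc D)} {a : ℕ} (T : PartitionTree D X a)
  (ρ : Measure (Euc D)) [IsProbabilityMeasure ρ] (xstar : T.Cell → Euc D)

/-- The cells at depth `j`, as a finset. -/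
def lev (j : ℕ) : Finset T.Cell := (T.level_finite j).toFinset

omit [IsProbabilityMeasure ρ] in
lemma lev_zero : T.lev 0 = {T.root} := by
  ext I
  simp only [lev, Set.Finite.mem_toFinset, Set.mem_setOf_eq, Finset.mem_singleton]
  exact ⟨fun h => T.eq_root_of_depth_eq_zero I h, fun h => h ▸ T.depth_root⟩

lemma lev_succ (j : ℕ) :
    T.lev (j + 1) = (T.lev j).biUnion (fun I => (T.children_finite I).toFinset) := by
  ext J
  simp only [lev, Finset.mem_biUnion, Set.Finite.mem_toFinset, Set.mem_setOf_eq]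
  constructor
  · intro hJ
    have hr : J ≠ T.root := by
      intro h; rw [h, T.depth_root] at hJ; omega
    have hd := T.depth_parent J hr
    exact ⟨T.parent J, by omega, rfl, hr⟩
  · rintro ⟨I, hI, hJ⟩
    rw [T.depth_of_children hJ, hI]

/-- The total error at level `j`. -/
def levErr (j : ℕ) : ℝ := ∑ I ∈ T.lev j, T.cellErr ρ xstar I

lemma levErr_nonneg (j : ℕ) : 0 ≤ T.levErr ρ xstar j :=
  Finset.sum_nonneg (fun I _ => T.cellErr_nonneg ρ xstar I)

lemma sum_epsSq_lev (j : ℕ) :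
    ∑ I ∈ T.lev j, T.epsSq ρ xstar I
      = T.levErr ρ xstar j - T.levErr ρ xstar (j + 1) := by
  have hdisj : (↑(T.lev j) : Set T.Cell).PairwiseDisjoint
      (fun I => (T.children_finite I).toFinset) := by
    intro I hI I' hI' hne
    simp only [Function.onFun, Finset.disjoint_left]
    intro J hJ hJ'
    simp only [Set.Finite.mem_toFinset] at hJ hJ'
    exact hne (hJ.1 ▸ hJ'.1.symm ▸ rfl)
  calc ∑ I ∈ T.lev j, T.epsSq ρ xstar I
      = ∑ I ∈ T.lev j, (T.cellErr ρ xstar I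
          - ∑ J ∈ (T.children_finite I).toFinset, T.cellErr ρ xstar J) := by
        refine Finset.sum_congr rfl (fun I _ => ?_); exact T.epsSq_eq ρ xstar I
    _ = T.levErr ρ xstar j
        - ∑ I ∈ T.lev j, ∑ J ∈ (T.children_finite I).toFinset, T.cellErr ρ xstar J := by
        rw [Finset.sum_sub_distrib]; rfl
    _ = T.levErr ρ xstar j - T.levErr ρ xstar (j + 1) := by
        simp only [levErr]
        rw [T.lev_succ j, Finset.sum_biUnion hdisj]

set_option maxHeartbeats 1000000 in
lemma B_finite {R : ℝ} (hR : ∀ᵐ x ∂ρ, ‖x‖ ≤ R) {η : ℝ} (hη : 0 < η) :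
    {I : T.Cell | η ≤ T.eps ρ xstar I}.Finite := by
  by_contra hinf
  replace hinf : {I : T.Cell | η ≤ T.eps ρ xstar I}.Infinite := hinf
  set E0 : ℝ := T.cellErr ρ xstar T.root with hE0
  have hE0nn : 0 ≤ E0 := T.cellErr_nonneg ρ xstar T.root
  obtain ⟨F, hFB, hFcard⟩ := hinf.exists_subset_card_eq (⌊E0 / η ^ 2⌋₊ + 1)
  set N : ℕ := F.sup T.depth + 1 with hN
  have hFsub : F ⊆ (Finset.range N).biUnion T.lev := by
    intro I hI
    simp only [Finset.mem_biUnion, Finset.mem_range, lev, Set.Finite.mem_toFinset,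
      Set.mem_setOf_eq]
    exact ⟨T.depth I, by have := Finset.le_sup (f := T.depth) hI; omega, rfl⟩
  have hlevdisj : (↑(Finset.range N) : Set ℕ).PairwiseDisjoint T.lev := by
    intro j _ j' _ hne
    simp only [Function.onFun, Finset.disjoint_left, lev, Set.Finite.mem_toFinset,
      Set.mem_setOf_eq]
    intro J hJ hJ'
    exact hne (hJ ▸ hJ'.symm ▸ rfl)
  have key : (F.card : ℝ) * η ^ 2 ≤ E0 := by
    have h1 : (F.card : ℝ) * η ^ 2 ≤ ∑ I ∈ F, T.epsSq ρ xstar I := by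
      have : (F.card : ℝ) * η ^ 2 = ∑ _I ∈ F, η ^ 2 := by
        rw [Finset.sum_const, nsmul_eq_mul]
      rw [this]
      refine Finset.sum_le_sum (fun I hI => ?_)
      have hnn := T.epsSq_nonneg ρ xstar hR I
      have h2 : η ^ 2 ≤ Real.sqrt (T.epsSq ρ xstar I) ^ 2 :=
        pow_le_pow_left₀ hη.le (hFB hI) 2
      rwa [Real.sq_sqrt hnn] at h2
    have h2 : ∑ I ∈ F, T.epsSq ρ xstar I ≤ E0 := by
      calc ∑ I ∈ F, T.epsSq ρ xstar I
          ≤ ∑ I ∈ (Finset.range N).biUnion T.lev, T.epsSq ρ xstar I :=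
            Finset.sum_le_sum_of_subset_of_nonneg hFsub
              (fun I _ _ => T.epsSq_nonneg ρ xstar hR I)
        _ = ∑ j ∈ Finset.range N, ∑ I ∈ T.lev j, T.epsSq ρ xstar I :=
            Finset.sum_biUnion hlevdisj
        _ = ∑ j ∈ Finset.range N, (T.levErr ρ xstar j - T.levErr ρ xstar (j + 1)) :=
            Finset.sum_congr rfl (fun j _ => T.sum_epsSq_lev ρ xstar j)
        _ = T.levErr ρ xstar 0 - T.levErr ρ xstar N := Finset.sum_range_sub' _ N
        _ ≤ T.levErr ρ xstar 0 := by
            have := T.levErr_nonneg ρ xstar N; linarith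
        _ = E0 := by rw [levErr, T.lev_zero, Finset.sum_singleton]
    linarith
  have hlt : E0 / η ^ 2 < (F.card : ℝ) := by
    rw [hFcard]
    have := Nat.lt_floor_add_one (E0 / η ^ 2)
    push_cast
    push_cast at this
    linarith
  have : E0 < (F.card : ℝ) * η ^ 2 := by
    rwa [div_lt_iff₀ (by positivity)] at hlt
  linarith

end PartitionTree
theorem stmt_4 {D : ℕ} {X : Set (Euc D)} {a : ℕ} (ha : 1 ≤ a) (T : PartitionTree D X a)
    (hX0 : (0 : Euc D) ∈ X) (hXb : Bornology.IsBounded X) (hXd : Metric.diam X ≤ 1)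
    (ρ : Measure (Euc D)) [IsProbabilityMeasure ρ] (hρX : ρ Xᶜ = 0)
    (xstar : T.Cell → Euc D) (hxstar : ∀ I, xstar I ∈ X)
    (η : ℝ) (hη : 0 < η) :
    T.IsSubtree (T.Teta ρ xstar η) ∧ (T.Teta ρ xstar η).Finite := by
  obtain ⟨R, hR⟩ := ae_bound_of_bounded ρ hρX hXb
  constructor
  · intro I hI
    unfold PartitionTree.Teta at hI ⊢
    split_ifs at hI ⊢ with h
    · simp only [Set.mem_singleton_iff] at hI ⊢
      rw [hI, T.parent_root]
    · obtain ⟨k, J, hJd, hJe⟩ := hI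
      by_cases hr : I = T.root
      · rw [hr, T.parent_root]
        exact ⟨k, J, hr ▸ hJd, hJe⟩
      · exact ⟨k + 1, J, T.descend_subset_descend_succ ⟨rfl, hr⟩ k hJd, hJe⟩
  · unfold PartitionTree.Teta
    split_ifs with h
    · exact Set.finite_singleton _
    · apply ((T.B_finite ρ xstar hR hη).biUnion
        (fun J (_ : J ∈ {J | η ≤ T.eps ρ xstar J}) =>
          (Set.finite_Iic (T.depth J)).image (fun k => T.parent^[k] J))).subset
      intro I hI
      obtain ⟨k, J, hJd, hJe⟩ := hI
      obtain ⟨h1, h2⟩ := T.descend_spec k hJd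
      exact Set.mem_biUnion hJe ⟨k, by simp only [Set.mem_Iic]; omega, h1⟩

end
end

section
/- Let Λ ⊆ 𝕋 be a partition of 𝒳 by cells of the partition tree, and suppose there is a constant C₁ > 0 and s > 0 with ediam(I) ≤ C₁ ρ(I)^s for all I ∈ Λ. Then for every 0 < η < 1, #{I ∈ Λ : ε_I ≥ η} ≤ #{I ∈ Λ : ℰ_I ≥ η²} ≤ C₁^{2/(2s+1)} · η^{−2/(2s+1)}. -/
open MeasureTheory Set ProbabilityTheory
open scoped BigOperators ENNReal NNReal

attribute [local instance] Classical.propDecidable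

noncomputable section

lemma errBound_aux {D : ℕ} (ρ : Measure (Euc D)) [IsProbabilityMeasure ρ]
    (sset : Set (Euc D)) (hsm : MeasurableSet sset) (hsb : Bornology.IsBounded sset)
    (hρs : ρ sset ≠ 0) (c : Euc D)
    (hc : c = (ρ sset).toReal⁻¹ • ∫ x in sset, x ∂ρ) :
    ∫ x in sset, ‖x - c‖ ^ 2 ∂ρ ≤ ediam ρ sset ^ 2 * (ρ sset).toReal := by
  obtain ⟨R, hR⟩ := isBounded_iff_forall_norm_le.1 hsb
  have hfin : ρ sset ≠ ⊤ := measure_ne_top ρ _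
  set x0 : ℝ := (ρ sset).toReal with hx0def
  have hx0 : 0 < x0 := ENNReal.toReal_pos hρs hfin
  have hid : IntegrableOn (fun y : Euc D => y) sset ρ :=
    Measure.integrableOn_of_bounded hfin aestronglyMeasurable_id
      (ae_restrict_of_forall_mem hsm fun y hy => hR y hy)
  have hconst : ∀ z : Euc D, IntegrableOn (fun _ : Euc D => z) sset ρ := fun z =>
    integrableOn_const hfin
  have hmeas : AEStronglyMeasurable (fun x : Euc D => ‖x - c‖ ^ 2) ρ :=
    (((continuous_id.sub continuous_const).norm.pow 2)).aestronglyMeasurable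
  have hint2 : IntegrableOn (fun x : Euc D => ‖x - c‖ ^ 2) sset ρ := by
    apply Measure.integrableOn_of_bounded (M := (R + ‖c‖) ^ 2) hfin hmeas
    · apply ae_restrict_of_forall_mem hsm
      intro x hx
      have h1 : ‖x - c‖ ≤ R + ‖c‖ :=
        (norm_sub_le _ _).trans (by have := hR x hx; linarith)
      have h2 : (0:ℝ) ≤ ‖x - c‖ := norm_nonneg _
      rw [Real.norm_of_nonneg (by positivity)]
      nlinarith
  have key : ∀ J : Set (Euc D), MeasurableSet J → J ⊆ sset → ρ J = 0 →
      ∫ x in sset, ‖x - c‖ ^ 2 ∂ρ ≤ (Metric.diam (sset \ J)) ^ 2 * x0 := by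
    intro J hJm hJs hJ0
    set d := Metric.diam (sset \ J) with hd
    have hd0 : 0 ≤ d := Metric.diam_nonneg
    have hdb : Bornology.IsBounded (sset \ J) := hsb.subset diff_subset
    have hnotJ : ∀ᵐ y ∂ρ.restrict sset, y ∉ J := by
      have : ρ.restrict sset J = 0 :=
        le_antisymm (le_trans (Measure.restrict_le_self J) hJ0.le) (zero_le)
      exact (ae_iff.2 (by simpa using this))
    have hpt : ∀ x ∈ sset \ J, ‖x - c‖ ≤ d := by
      intro x hx
      have hI : ∫ y in sset, (x - y) ∂ρ = x0 • x - ∫ y in sset, y ∂ρ := by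
        rw [integral_sub (hconst x) hid, setIntegral_const]; rfl
      have hxc : x - c = x0⁻¹ • ∫ y in sset, (x - y) ∂ρ := by
        rw [hI, smul_sub, hc, smul_smul, inv_mul_cancel₀ hx0.ne', one_smul]
      have hnorm : ‖∫ y in sset, (x - y) ∂ρ‖ ≤ d * x0 := by
        apply norm_setIntegral_le_of_norm_le_const_ae hfin.lt_top
        filter_upwards [hnotJ, ae_restrict_mem hsm] with y hyJ hys
        have := Metric.dist_le_diam_of_mem hdb hx ⟨hys, hyJ⟩
        simpa [dist_eq_norm] using this
      calc ‖x - c‖ = x0⁻¹ * ‖∫ y in sset, (x - y) ∂ρ‖ := by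
            rw [hxc, norm_smul, Real.norm_of_nonneg (by positivity)]
        _ ≤ x0⁻¹ * (d * x0) := by
            exact mul_le_mul_of_nonneg_left hnorm (by positivity)
        _ = d := by field_simp
    calc ∫ x in sset, ‖x - c‖ ^ 2 ∂ρ ≤ ∫ _x in sset, d ^ 2 ∂ρ := by
          apply integral_mono_ae hint2 (integrable_const _)
          filter_upwards [hnotJ, ae_restrict_mem hsm] with x hxJ hxs
          exact pow_le_pow_left₀ (norm_nonneg _) (hpt x ⟨hxs, hxJ⟩) 2
      _ = d ^ 2 * x0 := by rw [setIntegral_const, smul_eq_mul, mul_comm]; rfl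
  have hnn : (0:ℝ) ≤ ∫ x in sset, ‖x - c‖ ^ 2 ∂ρ :=
    integral_nonneg fun x => by positivity
  set E := ∫ x in sset, ‖x - c‖ ^ 2 ∂ρ with hE
  have hne : Nonempty {J : Set (Euc D) // MeasurableSet J ∧ J ⊆ sset ∧ ρ J = 0} :=
    ⟨⟨∅, MeasurableSet.empty, empty_subset _, measure_empty⟩⟩
  have hq : Real.sqrt (E / x0) ≤ ediam ρ sset := by
    apply le_ciInf
    rintro ⟨J, hJm, hJs, hJ0⟩
    have h1 := key J hJm hJs hJ0
    have hd0 : 0 ≤ Metric.diam (sset \ J) := Metric.diam_nonneg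
    have h2 : E / x0 ≤ (Metric.diam (sset \ J)) ^ 2 := (div_le_iff₀ hx0).2 h1
    calc Real.sqrt (E / x0) ≤ Real.sqrt ((Metric.diam (sset \ J)) ^ 2) :=
          Real.sqrt_le_sqrt h2
      _ = Metric.diam (sset \ J) := Real.sqrt_sq hd0
  have h3 : E / x0 ≤ (ediam ρ sset) ^ 2 := by
    calc E / x0 = (Real.sqrt (E / x0)) ^ 2 := (Real.sq_sqrt (by positivity)).symm
      _ ≤ (ediam ρ sset) ^ 2 := pow_le_pow_left₀ (Real.sqrt_nonneg _) hq 2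
  calc E = (E / x0) * x0 := by field_simp
    _ ≤ (ediam ρ sset) ^ 2 * x0 := mul_le_mul_of_nonneg_right h3 hx0.le

theorem stmt_5 {D : ℕ} {X : Set (Euc D)} {a : ℕ} (ha : 1 ≤ a) (T : PartitionTree D X a)
    (hX0 : (0 : Euc D) ∈ X) (hXb : Bornology.IsBounded X) (hXd : Metric.diam X ≤ 1)
    (ρ : Measure (Euc D)) [IsProbabilityMeasure ρ] (hρX : ρ Xᶜ = 0)
    (xstar : T.Cell → Euc D) (hxstar : ∀ I, xstar I ∈ X)
    (s C₁ : ℝ) (hs : 0 < s) (hC₁ : 0 < C₁)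
    (Λ : Set T.Cell)
    (hcover : (⋃ I ∈ Λ, T.cset I) = X)
    (hdisj : ∀ I ∈ Λ, ∀ J ∈ Λ, I ≠ J → Disjoint (T.cset I) (T.cset J))
    (hediam : ∀ I ∈ Λ, ediam ρ (T.cset I) ≤ C₁ * (ρ (T.cset I)).toReal ^ s)
    (η : ℝ) (hη0 : 0 < η) (hη1 : η < 1) :
    {I ∈ Λ | η ≤ T.eps ρ xstar I}.Finite ∧
    {I ∈ Λ | η ^ 2 ≤ T.cellErr ρ xstar I}.Finite ∧
    {I ∈ Λ | η ≤ T.eps ρ xstar I}.ncard ≤ {I ∈ Λ | η ^ 2 ≤ T.cellErr ρ xstar I}.ncard ∧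
    ({I ∈ Λ | η ^ 2 ≤ T.cellErr ρ xstar I}.ncard : ℝ) ≤
      C₁ ^ ((2 : ℝ) / (2 * s + 1)) * η ^ (-(2 : ℝ) / (2 * s + 1)) := by
  classical
  set S : Set T.Cell := {I ∈ Λ | η ^ 2 ≤ T.cellErr ρ xstar I} with hSdef
  have hsubX : ∀ I : T.Cell, T.cset I ⊆ X := by
    intro I
    have h := T.level_cover (T.depth I)
    conv_rhs => rw [← h]
    exact Set.subset_biUnion_of_mem (u := fun J => T.cset J) rfl
  have hXb' : ∀ I : T.Cell, Bornology.IsBounded (T.cset I) := fun I => hXb.subset (hsubX I)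
  set t : ℝ := 1 / (2 * s + 1) with ht
  have h2s1 : (0:ℝ) < 2 * s + 1 := by linarith
  have ht0 : 0 < t := by positivity
  set m : ℝ := η ^ (2 * t) * C₁ ^ (-(2 * t)) with hm
  have hm0 : 0 < m :=
    mul_pos (Real.rpow_pos_of_pos hη0 _) (Real.rpow_pos_of_pos hC₁ _)
  have hkey : ∀ I ∈ S, m ≤ (ρ (T.cset I)).toReal := by
    intro I hI
    obtain ⟨hIΛ, hIE⟩ := hI
    have hne : ρ (T.cset I) ≠ 0 := by
      intro h0
      have hz : T.cellErr ρ xstar I = 0 := by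
        rw [PartitionTree.cellErr, Measure.restrict_eq_zero.mpr h0, integral_zero_measure]
      rw [hz] at hIE
      nlinarith
    set x : ℝ := (ρ (T.cset I)).toReal with hx
    have hx0 : 0 < x := ENNReal.toReal_pos hne (measure_ne_top ρ _)
    have hcdef : T.center ρ xstar I = x⁻¹ • ∫ y in T.cset I, y ∂ρ := by
      rw [PartitionTree.center, if_pos hne]
    have hEb : T.cellErr ρ xstar I ≤ ediam ρ (T.cset I) ^ 2 * x :=
      errBound_aux ρ (T.cset I) (T.cset_measurable I) (hXb' I) hne _ hcdef
    have hed0 : 0 ≤ ediam ρ (T.cset I) := Real.iInf_nonneg fun J => Metric.diam_nonneg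
    have hed := hediam I hIΛ
    have hsq : (x ^ s) ^ (2:ℕ) = x ^ (2 * s) := by
      rw [← Real.rpow_natCast (x ^ s) 2, ← Real.rpow_mul hx0.le]
      norm_num [mul_comm]
    have hx1 : x ^ (2 * s + 1) = x ^ (2 * s) * x := Real.rpow_add_one hx0.ne' _
    have h1 : η ^ 2 ≤ C₁ ^ 2 * x ^ (2 * s + 1) := by
      have h2 : ediam ρ (T.cset I) ^ 2 ≤ (C₁ * x ^ s) ^ 2 := pow_le_pow_left₀ hed0 hed 2
      calc η ^ 2 ≤ T.cellErr ρ xstar I := hIE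
        _ ≤ ediam ρ (T.cset I) ^ 2 * x := hEb
        _ ≤ (C₁ * x ^ s) ^ 2 * x := mul_le_mul_of_nonneg_right h2 hx0.le
        _ = C₁ ^ 2 * ((x ^ s) ^ (2:ℕ) * x) := by ring
        _ = C₁ ^ 2 * x ^ (2 * s + 1) := by rw [hsq, hx1]
    have h6 : (η ^ 2 / C₁ ^ 2 : ℝ) ≤ x ^ (2 * s + 1) := by
      rw [div_le_iff₀ (by positivity)]
      linarith [h1]
    have h7 : ((η ^ 2 / C₁ ^ 2 : ℝ)) ^ t ≤ (x ^ (2 * s + 1)) ^ t :=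
      Real.rpow_le_rpow (by positivity) h6 ht0.le
    have h8 : (x ^ (2 * s + 1)) ^ t = x := by
      rw [← Real.rpow_mul hx0.le]
      rw [show (2 * s + 1) * t = 1 by rw [ht]; field_simp]
      exact Real.rpow_one x
    have h9 : m = ((η ^ 2 / C₁ ^ 2 : ℝ)) ^ t := by
      rw [Real.div_rpow (by positivity) (by positivity),
        ← Real.rpow_natCast η 2, ← Real.rpow_natCast C₁ 2,
        ← Real.rpow_mul hη0.le, ← Real.rpow_mul hC₁.le, hm,
        Real.rpow_neg hC₁.le, div_eq_mul_inv]
      norm_num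
    rw [h9]
    rw [h8] at h7
    exact h7
  have hcount : ∀ F : Finset T.Cell, ↑F ⊆ S → (F.card : ℝ) * m ≤ 1 := by
    intro F hF
    have hdisjF : (↑F : Set T.Cell).PairwiseDisjoint T.cset := fun I hI J hJ hIJ =>
      hdisj I (hF hI).1 J (hF hJ).1 hIJ
    have hsum : ∑ I ∈ F, ρ (T.cset I) ≤ 1 := by
      rw [← measure_biUnion_finset hdisjF fun I _ => T.cset_measurable I]
      exact prob_le_one
    have hsumR : ∑ I ∈ F, (ρ (T.cset I)).toReal ≤ 1 := by
      rw [← ENNReal.toReal_sum fun I _ => measure_ne_top ρ _]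
      simpa using ENNReal.toReal_mono ENNReal.one_ne_top hsum
    calc (F.card : ℝ) * m = ∑ _I ∈ F, m := by rw [Finset.sum_const, nsmul_eq_mul]
      _ ≤ ∑ I ∈ F, (ρ (T.cset I)).toReal := Finset.sum_le_sum fun I hI => hkey I (hF hI)
      _ ≤ 1 := hsumR
  have hSfin : S.Finite := by
    by_contra hinf
    obtain ⟨F, hFs, hFc⟩ := Set.Infinite.exists_subset_card_eq hinf (⌈m⁻¹⌉₊ + 1)
    have h1 := hcount F hFs
    rw [hFc] at h1
    have h2 : m⁻¹ < ((⌈m⁻¹⌉₊ + 1 : ℕ) : ℝ) := by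
      push_cast
      have := Nat.le_ceil (m⁻¹)
      linarith
    have h3 := mul_lt_mul_of_pos_right h2 hm0
    rw [inv_mul_cancel₀ hm0.ne'] at h3
    linarith
  have hcard : (S.ncard : ℝ) * m ≤ 1 := by
    have h := hcount hSfin.toFinset (by simp)
    rwa [Set.ncard_eq_toFinset_card S hSfin]
  have hfinal : (S.ncard : ℝ) ≤ C₁ ^ ((2:ℝ) / (2 * s + 1)) * η ^ (-(2:ℝ) / (2 * s + 1)) := by
    have e1 : (2:ℝ) * t = 2 / (2 * s + 1) := by rw [ht]; ring
    have hrhs : m⁻¹ = C₁ ^ ((2:ℝ) / (2 * s + 1)) * η ^ (-(2:ℝ) / (2 * s + 1)) := by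
      rw [hm, mul_inv, ← Real.rpow_neg hη0.le, ← Real.rpow_neg hC₁.le, neg_neg,
        mul_comm, e1]
      norm_num [neg_div]
    rw [← hrhs, ← one_div]
    rw [le_div_iff₀ hm0]
    exact hcard
  have hsub1 : {I ∈ Λ | η ≤ T.eps ρ xstar I} ⊆ S := by
    rintro I ⟨hIΛ, hIe⟩
    have h1 : η ^ 2 ≤ T.epsSq ρ xstar I := by
      rw [PartitionTree.eps] at hIe
      exact (Real.le_sqrt' hη0).1 hIe
    have h2 : 0 ≤ ∑ᶠ J ∈ T.children I, T.cellErr ρ xstar J := by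
      rw [finsum_mem_def]
      refine finsum_nonneg fun J => Set.indicator_nonneg (fun J' _ => ?_) J
      rw [PartitionTree.cellErr]
      exact integral_nonneg fun y => by positivity
    rw [PartitionTree.epsSq] at h1
    exact ⟨hIΛ, by linarith⟩
  exact ⟨hSfin.subset hsub1, hSfin, Set.ncard_le_ncard hsub1 hSfin, hfinal⟩


end
end
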